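/- Let p be a prime and let G be a p-group generated by m elements g₁, …, g_m. Let M be a module over the group algebra F_p[G] that is generated, as an F_p[G]-module, by d elements. Let N be an F_p[G]-submodule of M such that the quotient M/N has dimension 1 as an F_p-vector space (equivalently, M/N has exactly p elements). Then N can be generated, as an F_p[G]-module, by at most d + m − 1 elements. -/

import Mathlib

open MonoidAlgebra

theorem submodule_of_codimension_one_generators
    (p : ℕ) (hp : p.Prime) (G : Type*) [Group G] (hpg : IsPGroup p G)
    (m : ℕ) (g : Fin m → G) (hgen : Subgroup.closure (Set.range g) = ⊤)
    (M : Type*) [AddCommGroup M] [Module (MonoidAlgebra (ZMod p) G) M]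
    (d : ℕ) (S : Finset M) (hScard : S.card = d)
    (hSgen : Submodule.span (MonoidAlgebra (ZMod p) G) (S : Set M) = ⊤)
    (N : Submodule (MonoidAlgebra (ZMod p) G) M)
    (hN : Nat.card (M ⧸ N) = p) :
    ∃ T : Finset M, T.card ≤ d + m - 1 ∧
      Submodule.span (MonoidAlgebra (ZMod p) G) (T : Set M) = N := by
  classical
  set R := MonoidAlgebra (ZMod p) G with hR
  -- characteristic p facts
  have hpR : ((p : ℕ) : R) = 0 := by
    rw [← map_natCast (algebraMap (ZMod p) R) p, ZMod.natCast_self, map_zero]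
  have hpsmulM : ∀ x : M, (p : ℤ) • x = 0 := by
    intro x
    rw [← Int.cast_smul_eq_zsmul R]
    push_cast
    rw [hpR, zero_smul]
  have hpsmulQ : ∀ y : M ⧸ N, (p : ℤ) • y = 0 := by
    intro y
    rw [← Int.cast_smul_eq_zsmul R]
    push_cast
    rw [hpR, zero_smul]
  haveI hfact : Fact p.Prime := ⟨hp⟩
  have hfinQ : Finite (M ⧸ N) := Nat.finite_of_card_ne_zero (by rw [hN]; exact hp.pos.ne')
  have fermat : ∀ (a : ZMod p) (j : ℕ), a ^ p ^ j = a := by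
    intro a j
    induction j with
    | zero => simp
    | succ j ih => rw [pow_succ, pow_mul, ih, ZMod.pow_card]
  -- find a generator not in N
  have hx0 : ∃ x₀ ∈ S, N.mkQ x₀ ≠ 0 := by
    by_contra h
    push_neg at h
    have hSN : (S : Set M) ⊆ (N : Set M) := by
      intro s hs
      have := h s (by exact_mod_cast hs)
      rwa [Submodule.mkQ_apply, Submodule.Quotient.mk_eq_zero] at this
    have : N = ⊤ := top_unique (hSgen ▸ Submodule.span_le.2 hSN)
    have : Subsingleton (M ⧸ N) := Submodule.Quotient.subsingleton_iff.2 this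
    have h1 : Nat.card (M ⧸ N) = 1 := Nat.card_eq_one_iff_unique.mpr ⟨this, inferInstance⟩
    have h2 := hp.two_le
    omega
  obtain ⟨x₀, hx₀S, hx₀⟩ := hx0
  set e : M ⧸ N := N.mkQ x₀ with he
  have horder : addOrderOf e = p := by
    have hdvd : addOrderOf e ∣ p := addOrderOf_dvd_of_nsmul_eq_zero (by
      have := hpsmulQ e; rwa [natCast_zsmul] at this)
    rcases (Nat.Prime.eq_one_or_self_of_dvd hp _ hdvd) with h1 | h2
    · exact absurd (AddMonoid.addOrderOf_eq_one_iff.mp h1) hx₀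
    · exact h2
  -- e generates the quotient
  have hsurj : ∀ y : M ⧸ N, ∃ k : ℤ, k • e = y := by
    have : AddSubgroup.zmultiples e = ⊤ := by
      apply AddSubgroup.eq_top_of_card_eq
      rw [Nat.card_zmultiples, horder, hN]
    intro y
    exact AddSubgroup.mem_zmultiples_iff.mp (this ▸ AddSubgroup.mem_top y)
  -- G acts trivially on the quotient
  have htriv : ∀ h : G, ∀ y : M ⧸ N, (of (ZMod p) G h) • y = y := by
    have key : ∀ h : G, (of (ZMod p) G h) • e = e := by
      intro h
      obtain ⟨j, hj⟩ := hpg h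
      obtain ⟨k, hk⟩ := hsurj ((of (ZMod p) G h) • e)
      have hiter : ∀ n : ℕ, (of (ZMod p) G (h ^ n)) • e = k ^ n • e := by
        intro n
        induction n with
        | zero => rw [pow_zero, pow_zero, map_one, one_smul, one_smul]
        | succ n ih =>
          rw [pow_succ, map_mul, mul_smul, ← hk, smul_comm, ih, smul_smul, ← pow_succ']
      have h1 : k ^ p ^ j • e = e := by rw [← hiter, hj, map_one, one_smul]
      have hferm : ((k : ZMod p)) ^ p ^ j = (k : ZMod p) := fermat _ _
      have hdvd : (p : ℤ) ∣ k ^ p ^ j - k := by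
        rw [← ZMod.intCast_zmod_eq_zero_iff_dvd]
        push_cast
        rw [hferm, sub_self]
      obtain ⟨c, hc⟩ := hdvd
      have : k • e = e := by
        calc k • e = (k ^ p ^ j - (k ^ p ^ j - k)) • e := by ring_nf
        _ = k ^ p ^ j • e - (k ^ p ^ j - k) • e := by rw [sub_smul]
        _ = e - ((p : ℤ) * c) • e := by rw [h1, hc]
        _ = e - (p : ℤ) • (c • e) := by rw [mul_smul]
        _ = e := by rw [smul_comm, hpsmulQ, smul_zero, sub_zero]
      rw [← hk, this]
    intro h y
    obtain ⟨k, rfl⟩ := hsurj y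
    rw [smul_comm, key]
  -- coefficients
  choose c hc using fun s : M => hsurj (N.mkQ s)
  set T : Finset M :=
    ((S.erase x₀).image (fun s => s - c s • x₀)) ∪
      (Finset.univ.image (fun j : Fin m => (of (ZMod p) G (g j)) • x₀ - x₀)) with hT
  refine ⟨T, ?_, ?_⟩
  · rw [hT]
    have hd : 1 ≤ d := hScard ▸ Finset.card_pos.mpr ⟨x₀, hx₀S⟩
    have h1 := Finset.card_union_le ((S.erase x₀).image (fun s => s - c s • x₀))
      (Finset.univ.image (fun j : Fin m => (of (ZMod p) G (g j)) • x₀ - x₀))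
    have h2 := Finset.card_image_le (s := S.erase x₀) (f := fun s => s - c s • x₀)
    have h3 := Finset.card_image_le (s := (Finset.univ : Finset (Fin m)))
      (f := fun j : Fin m => (of (ZMod p) G (g j)) • x₀ - x₀)
    have h4 : (S.erase x₀).card = d - 1 := by rw [Finset.card_erase_of_mem hx₀S, hScard]
    have h5 : (Finset.univ : Finset (Fin m)).card = m := Finset.card_univ.trans (Fintype.card_fin m)
    omega
  · -- span T = N
    have hTN : Submodule.span R (T : Set M) ≤ N := by
      apply Submodule.span_le.2
      intro t ht
      simp only [hT, Finset.coe_union, Set.mem_union, Finset.coe_image, Set.mem_image,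
        Finset.mem_coe, Finset.mem_erase, Finset.coe_univ, Set.image_univ, Set.mem_range] at ht
      have memN : ∀ x : M, N.mkQ x = 0 → x ∈ N := by
        intro x hx
        rwa [Submodule.mkQ_apply, Submodule.Quotient.mk_eq_zero] at hx
      rcases ht with ⟨s, ⟨-, hsS⟩, rfl⟩ | ⟨j, rfl⟩
      · apply memN
        rw [map_sub, map_zsmul, ← he, hc s, sub_self]
      · apply memN
        rw [map_sub, map_smul, ← he, htriv, sub_self]
    set N' := Submodule.span R (T : Set M) with hN'
    refine le_antisymm hTN ?_
    -- the stabilizer-style subgroup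
    have hgensub : ∀ h : G, (of (ZMod p) G h) • x₀ - x₀ ∈ N' := by
      let H : Subgroup G :=
        { carrier := {h : G | (of (ZMod p) G h) • x₀ - x₀ ∈ N'}
          one_mem' := by
            show (of (ZMod p) G (1 : G)) • x₀ - x₀ ∈ N'
            rw [map_one, one_smul, sub_self]
            exact zero_mem _
          mul_mem' := by
            intro a b ha hb
            have : (of (ZMod p) G (a * b)) • x₀ - x₀ =
                (of (ZMod p) G a) • ((of (ZMod p) G b) • x₀ - x₀) +
                  ((of (ZMod p) G a) • x₀ - x₀) := by
              rw [smul_sub, map_mul, mul_smul]; abel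
            show (of (ZMod p) G (a * b)) • x₀ - x₀ ∈ N'
            rw [this]
            exact add_mem (Submodule.smul_mem N' _ hb) ha
          inv_mem' := by
            intro a ha
            have : (of (ZMod p) G a⁻¹) • x₀ - x₀ =
                -((of (ZMod p) G a⁻¹) • ((of (ZMod p) G a) • x₀ - x₀)) := by
              rw [smul_sub, ← mul_smul, ← map_mul, inv_mul_cancel, map_one, one_smul]; abel
            show (of (ZMod p) G a⁻¹) • x₀ - x₀ ∈ N'
            rw [this]
            exact neg_mem (Submodule.smul_mem N' _ ha) }
      intro h
      have hsub : Subgroup.closure (Set.range g) ≤ H := by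
        rw [Subgroup.closure_le]
        rintro x ⟨j, rfl⟩
        show (of (ZMod p) G (g j)) • x₀ - x₀ ∈ N'
        apply Submodule.subset_span
        rw [hT]
        simp only [Finset.coe_union, Set.mem_union, Finset.coe_image, Finset.coe_univ,
          Set.image_univ, Set.mem_range]
        exact Or.inr ⟨j, rfl⟩
      have hmem : h ∈ Subgroup.closure (Set.range g) := by rw [hgen]; trivial
      exact hsub hmem
    -- every r • x₀ is congruent to an integer multiple of x₀ mod N'
    have hr : ∀ r : R, ∃ k : ℤ, r • x₀ - k • x₀ ∈ N' := by
      intro r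
      refine MonoidAlgebra.induction_on (motive := fun r => ∃ k : ℤ, r • x₀ - k • x₀ ∈ N') r ?_ ?_ ?_
      · intro h
        exact ⟨1, by rw [one_smul]; exact hgensub h⟩
      · rintro f f' ⟨k, hk⟩ ⟨k', hk'⟩
        refine ⟨k + k', ?_⟩
        have : (f + f') • x₀ - (k + k') • x₀ = (f • x₀ - k • x₀) + (f' • x₀ - k' • x₀) := by
          rw [add_smul, add_smul]; abel
        rw [this]
        exact add_mem hk hk'
      · rintro a f ⟨k, hk⟩
        refine ⟨(a.val : ℤ) * k, ?_⟩
        have hne : NeZero p := ⟨hp.pos.ne'⟩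
        have ha : ((a.val : ℕ) : ZMod p) = a := ZMod.natCast_rightInverse a
        have h1 : (a • f) • x₀ = (a.val : ℕ) • (f • x₀) := by
          calc (a • f) • x₀ = ((a.val : ℕ) • f) • x₀ := by
                rw [← Nat.cast_smul_eq_nsmul (ZMod p) a.val f, ha]
          _ = (a.val : ℕ) • (f • x₀) := smul_assoc _ f x₀
        have h2 : (a • f) • x₀ - ((a.val : ℤ) * k) • x₀ = (a.val : ℕ) • (f • x₀ - k • x₀) := by
          rw [h1, smul_sub]
          congr 1
          rw [mul_smul, natCast_zsmul]
        rw [h2]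
        exact Submodule.toAddSubgroup N' |>.nsmul_mem hk _
    -- now N ≤ N'
    intro n hn
    have hnS : n ∈ Submodule.span R (S : Set M) := hSgen ▸ Submodule.mem_top
    obtain ⟨f, -, hf⟩ := Submodule.mem_span_finset.mp hnS
    -- additive submonoid of elements congruent to a multiple of x₀
    let P : AddSubmonoid M :=
      { carrier := {x : M | ∃ k : ℤ, x - k • x₀ ∈ N'}
        zero_mem' := ⟨0, by simp⟩
        add_mem' := by
          rintro x y ⟨k, hk⟩ ⟨k', hk'⟩
          refine ⟨k + k', ?_⟩
          have : x + y - (k + k') • x₀ = (x - k • x₀) + (y - k' • x₀) := by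
            rw [add_smul]; abel
          rw [this]; exact add_mem hk hk' }
    have hterm : ∀ s ∈ S, f s • s ∈ P := by
      intro s hs
      by_cases hsx : s = x₀
      · subst hsx
        obtain ⟨k, hk⟩ := hr (f s)
        exact ⟨k, hk⟩
      · have hmem : s - c s • x₀ ∈ N' := by
          apply Submodule.subset_span
          simp only [hT, Finset.coe_union, Set.mem_union, Finset.coe_image, Set.mem_image,
            Finset.mem_coe, Finset.mem_erase]
          exact Or.inl ⟨s, ⟨hsx, hs⟩, rfl⟩
        obtain ⟨k, hk⟩ := hr (f s)
        refine ⟨c s * k, ?_⟩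
        have : f s • s - (c s * k) • x₀ =
            f s • (s - c s • x₀) + c s • (f s • x₀ - k • x₀) := by
          rw [smul_sub, smul_sub, smul_comm (f s) (c s) x₀, mul_smul, smul_comm (c s) k x₀]
          abel
        rw [this]
        exact add_mem (Submodule.smul_mem N' _ hmem)
          (Submodule.toAddSubgroup N' |>.zsmul_mem hk _)
    have hnP : n ∈ P := hf ▸ AddSubmonoid.sum_mem P (fun s hs => hterm s hs)
    obtain ⟨k, hk⟩ := hnP
    -- k • x₀ ∈ N, so p ∣ k, so k • x₀ = 0
    have hkN : k • x₀ ∈ N := by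
      have h1 : n - k • x₀ ∈ N := hTN hk
      have := sub_mem hn h1
      simpa using this
    have hk0 : k • e = 0 := by
      rw [he, ← map_zsmul N.mkQ, Submodule.mkQ_apply, Submodule.Quotient.mk_eq_zero]
      exact hkN
    have hpk : (p : ℤ) ∣ k := by
      have := addOrderOf_dvd_iff_zsmul_eq_zero.mpr hk0
      rwa [horder] at this
    obtain ⟨c', hc'⟩ := hpk
    have hkx0 : k • x₀ = 0 := by
      rw [hc', mul_smul, hpsmulM]
    have : n - k • x₀ = n := by rw [hkx0, sub_zero]
    rwa [this] at hk
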